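/- Let K be ℝ or ℂ, d ≥ 1, and fix a norm ‖·‖ on K^d. Let 𝒜 be an irreducible compact set of d×d matrices over K, let ‖·‖_𝒜 be any Barabanov norm for 𝒜, let C = ecc(‖·‖_𝒜, ‖·‖), and let ℬ be any nonempty bounded set of d×d matrices over K. Then ρ(ℬ) ≥ ρ(𝒜) − C·H(𝒜,ℬ). -/

import Mathlib

open Filter Set

namespace JSRPaper

section Defs

variable {d : ℕ} {K : Type*} [RCLike K]

/-- `N` is a norm on `Fin d → K` (`K` is `ℝ` or `ℂ`). -/
def IsNorm (N : (Fin d → K) → ℝ) : Prop :=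
  (∀ x, 0 ≤ N x) ∧ (∀ x, N x = 0 ↔ x = 0) ∧
    (∀ (c : K) (x : Fin d → K), N (c • x) = ‖c‖ * N x) ∧
    (∀ x y, N (x + y) ≤ N x + N y)

/-- Operator norm of a matrix induced by the norm `N` on `Fin d → K`. -/
noncomputable def opNorm (N : (Fin d → K) → ℝ) (A : Matrix (Fin d) (Fin d) K) : ℝ :=
  sSup {r : ℝ | ∃ x : Fin d → K, N x = 1 ∧ r = N (A.mulVec x)}

/-- `‖𝒜‖ = sup_{A ∈ 𝒜} ‖A‖`. -/
noncomputable def setNorm (N : (Fin d → K) → ℝ) (𝒜 : Set (Matrix (Fin d) (Fin d) K)) : ℝ :=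
  sSup (opNorm N '' 𝒜)

/-- `𝒜^n`: the set of all products of `n` matrices from `𝒜`, with `𝒜^0 = {I}`. -/
def prodSet (𝒜 : Set (Matrix (Fin d) (Fin d) K)) : ℕ → Set (Matrix (Fin d) (Fin d) K)
  | 0 => {1}
  | n + 1 => {M | ∃ A ∈ 𝒜, ∃ P ∈ prodSet 𝒜 n, M = A * P}

/-- The joint spectral radius `ρ(𝒜) = limsup_{n → ∞} ‖𝒜^n‖^{1/n}`. -/
noncomputable def jsr (N : (Fin d → K) → ℝ) (𝒜 : Set (Matrix (Fin d) (Fin d) K)) : ℝ :=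
  Filter.limsup (fun n : ℕ => setNorm N (prodSet 𝒜 n) ^ ((n : ℝ)⁻¹)) Filter.atTop

/-- `𝒜` is irreducible: the matrices of `𝒜` have no common invariant subspace
other than `{0}` and `K^d`. -/
def IsIrred (𝒜 : Set (Matrix (Fin d) (Fin d) K)) : Prop :=
  ∀ W : Submodule K (Fin d → K), (∀ A ∈ 𝒜, ∀ x ∈ W, A.mulVec x ∈ W) → W = ⊥ ∨ W = ⊤

/-- `ℬ` is a bounded set of matrices (w.r.t. the operator norm induced by `N`). -/
def IsBdd (N : (Fin d → K) → ℝ) (ℬ : Set (Matrix (Fin d) (Fin d) K)) : Prop :=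
  ∃ C : ℝ, ∀ B ∈ ℬ, opNorm N B ≤ C

/-- The `p`-measure of irreducibility `χ_p(𝒜)`:
`inf_{‖x‖=1} sup { t : ball(0,t) ⊆ conv(𝒜_p(x) ∪ 𝒜_p(-x)) }`, where
`𝒜_p = ⋃_{k ≤ p} 𝒜^k`. -/
noncomputable def chi (N : (Fin d → K) → ℝ) (𝒜 : Set (Matrix (Fin d) (Fin d) K)) (p : ℕ) : ℝ :=
  sInf {s : ℝ | ∃ x : Fin d → K, N x = 1 ∧
    s = sSup {t : ℝ | {y : Fin d → K | N y ≤ t} ⊆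
      convexHull ℝ
        (((fun A : Matrix (Fin d) (Fin d) K => A.mulVec x) ''
            ⋃ k ∈ Finset.range (p + 1), prodSet 𝒜 k) ∪
          ((fun A : Matrix (Fin d) (Fin d) K => A.mulVec (-x)) ''
            ⋃ k ∈ Finset.range (p + 1), prodSet 𝒜 k))}}

/-- `ν_p(𝒜) = max{1, ‖𝒜‖^p} / χ_p(𝒜)`. -/
noncomputable def nu (N : (Fin d → K) → ℝ) (𝒜 : Set (Matrix (Fin d) (Fin d) K)) (p : ℕ) : ℝ :=
  max 1 (setNorm N 𝒜 ^ p) / chi N 𝒜 p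

/-- The Hausdorff distance between two matrix sets, w.r.t. the operator norm induced by `N`. -/
noncomputable def hdist (N : (Fin d → K) → ℝ) (𝒜 ℬ : Set (Matrix (Fin d) (Fin d) K)) : ℝ :=
  max (sSup ((fun A => sInf ((fun B => opNorm N (A - B)) '' ℬ)) '' 𝒜))
      (sSup ((fun B => sInf ((fun A => opNorm N (A - B)) '' 𝒜)) '' ℬ))

/-- `Nb` is a Barabanov norm for `𝒜`: it is a norm on `K^d` and
`ρ(𝒜)·‖x‖_b = max_{A ∈ 𝒜} ‖A x‖_b` for all `x` (`ρ(𝒜)` computed w.r.t. the reference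
norm `N`; its value does not depend on this choice). -/
def IsBarabanov (N Nb : (Fin d → K) → ℝ) (𝒜 : Set (Matrix (Fin d) (Fin d) K)) : Prop :=
  IsNorm Nb ∧ ∀ x : Fin d → K,
    jsr N 𝒜 * Nb x = sSup {r : ℝ | ∃ A ∈ 𝒜, r = Nb (A.mulVec x)}

/-- The eccentricity `ecc(N', N'') = (max_{x ≠ 0} N' x / N'' x) / (min_{x ≠ 0} N' x / N'' x)`. -/
noncomputable def eccen (N' N'' : (Fin d → K) → ℝ) : ℝ :=
  sSup {r : ℝ | ∃ x : Fin d → K, x ≠ 0 ∧ r = N' x / N'' x} /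
    sInf {r : ℝ | ∃ x : Fin d → K, x ≠ 0 ∧ r = N' x / N'' x}

end Defs

section Aux

variable {d : ℕ} {K : Type*} [RCLike K] {N : (Fin d → K) → ℝ}

lemma IsNorm.zero (hN : IsNorm N) : N 0 = 0 := (hN.2.1 0).mpr rfl

lemma IsNorm.sum_le (hN : IsNorm N) (s : Finset ℕ) (f : ℕ → (Fin d → K)) :
    N (∑ i ∈ s, f i) ≤ ∑ i ∈ s, N (f i) := by
  classical
  induction s using Finset.induction with
  | empty => simp [hN.zero]
  | insert _ _ hx ih =>
    rename_i a s
    rw [Finset.sum_insert hx, Finset.sum_insert hx]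
    exact le_trans (hN.2.2.2 _ _) (by linarith)

lemma IsNorm.sum_le' (hN : IsNorm N) (f : Fin d → (Fin d → K)) :
    N (∑ i, f i) ≤ ∑ i, N (f i) := by
  classical
  have : ∀ s : Finset (Fin d), N (∑ i ∈ s, f i) ≤ ∑ i ∈ s, N (f i) := by
    intro s
    induction s using Finset.induction with
    | empty => simp [hN.zero]
    | insert _ _ hx ih =>
      rename_i a s
      rw [Finset.sum_insert hx, Finset.sum_insert hx]
      exact le_trans (hN.2.2.2 _ _) (by linarith)
  exact this Finset.univ

/-- Upper equivalence constant. -/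
lemma IsNorm.exists_upper (hN : IsNorm N) :
    ∃ C : ℝ, 0 ≤ C ∧ ∀ x, N x ≤ C * ‖x‖ := by
  classical
  refine ⟨∑ i, N (Pi.single i 1), Finset.sum_nonneg fun i _ => hN.1 _, fun x => ?_⟩
  have hx : x = ∑ i, x i • (Pi.single i 1 : Fin d → K) := by
    ext j; simp [Pi.single_apply, eq_comm]
  calc N x = N (∑ i, x i • (Pi.single i 1 : Fin d → K)) := by rw [← hx]
    _ ≤ ∑ i, N (x i • (Pi.single i 1 : Fin d → K)) := hN.sum_le' _
    _ ≤ ∑ i, ‖x‖ * N (Pi.single i 1) := by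
        refine Finset.sum_le_sum fun i _ => ?_
        rw [hN.2.2.1]
        exact mul_le_mul_of_nonneg_right (norm_le_pi_norm x i) (hN.1 _)
    _ = (∑ i, N (Pi.single i 1)) * ‖x‖ := by rw [Finset.sum_mul]; exact Finset.sum_congr rfl fun i _ => mul_comm _ _

lemma IsNorm.neg (hN : IsNorm N) (x : Fin d → K) : N (-x) = N x := by
  have : (-x) = (-1 : K) • x := by ext j; simp
  rw [this, hN.2.2.1]; simp

lemma IsNorm.continuous (hN : IsNorm N) : Continuous N := by
  obtain ⟨C, hC0, hC⟩ := hN.exists_upper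
  have key : ∀ x y : Fin d → K, N x - N y ≤ C * ‖x - y‖ := by
    intro x y
    have h1 : N x ≤ N y + N (x - y) := by
      have := hN.2.2.2 y (x - y); simpa using this
    have := hC (x - y)
    linarith
  have lip : LipschitzWith (Real.toNNReal C) N := by
    refine LipschitzWith.of_dist_le_mul fun x y => ?_
    rw [Real.dist_eq, Real.coe_toNNReal C hC0]
    rcases abs_cases (N x - N y) with ⟨h, _⟩ | ⟨h, _⟩
    · rw [h]; exact le_trans (key x y) (le_of_eq (by rw [dist_eq_norm]))
    · rw [h]
      have := key y x
      have : N y - N x ≤ C * ‖x - y‖ := by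
        rw [show ‖x-y‖ = ‖y-x‖ from by rw [← norm_neg]; ring_nf]
        exact this
      rw [dist_eq_norm]; linarith
  exact lip.continuous

lemma IsNorm.pos (hN : IsNorm N) {x : Fin d → K} (hx : x ≠ 0) : 0 < N x :=
  lt_of_le_of_ne (hN.1 x) (fun h => hx ((hN.2.1 x).mp h.symm))

/-- Lower equivalence constant. -/
lemma IsNorm.exists_lower (hd : 1 ≤ d) (hN : IsNorm N) :
    ∃ c : ℝ, 0 < c ∧ ∀ x, c * ‖x‖ ≤ N x := by
  classical
  have hsc : IsCompact (Metric.sphere (0 : Fin d → K) 1) := isCompact_sphere _ _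
  have hne : (Metric.sphere (0 : Fin d → K) 1).Nonempty := by
    refine ⟨(Pi.single (⟨0, hd⟩ : Fin d) 1 : Fin d → K), ?_⟩
    simp [Pi.norm_single]
  obtain ⟨m, hm, hmin⟩ := hsc.exists_isMinOn hne hN.continuous.continuousOn
  have hm1 : ‖m‖ = 1 := by simpa using hm
  have hmne : m ≠ 0 := by intro h; rw [h] at hm1; simp at hm1
  refine ⟨N m, hN.pos hmne, fun x => ?_⟩
  rcases eq_or_ne x 0 with rfl | hx
  · simp [hN.zero]
  · have hnx : (0:ℝ) < ‖x‖ := norm_pos_iff.mpr hx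
    set u : Fin d → K := ((‖x‖⁻¹ : ℝ) : K) • x with hu
    have hun : ‖u‖ = 1 := by
      rw [hu, norm_smul]
      simp [abs_of_nonneg (inv_nonneg.mpr hnx.le), inv_mul_cancel₀ hnx.ne']
    have huS : u ∈ Metric.sphere (0 : Fin d → K) 1 := by simp [hun]
    have h1 : N m ≤ N u := hmin huS
    have h2 : N u = ‖x‖⁻¹ * N x := by
      rw [hu, hN.2.2.1]; simp [abs_of_nonneg (inv_nonneg.mpr hnx.le)]
    rw [h2] at h1
    calc N m * ‖x‖ ≤ (‖x‖⁻¹ * N x) * ‖x‖ := by nlinarith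
      _ = N x := by field_simp

/-- A vector with `N x = 1` exists. -/
lemma IsNorm.exists_unit (hd : 1 ≤ d) (hN : IsNorm N) : ∃ x : Fin d → K, N x = 1 := by
  set x₀ : Fin d → K := Pi.single (⟨0, hd⟩ : Fin d) 1 with hx₀
  have hne : x₀ ≠ 0 := by
    intro h
    have := congrFun h (⟨0, hd⟩ : Fin d)
    simp [hx₀, Pi.single_apply] at this
  have hp : 0 < N x₀ := hN.pos hne
  refine ⟨(((N x₀)⁻¹ : ℝ) : K) • x₀, ?_⟩
  rw [hN.2.2.1]
  rw [RCLike.norm_ofReal, abs_of_nonneg (inv_nonneg.mpr hp.le), inv_mul_cancel₀ hp.ne']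

/-- Entry-sum bound for mulVec. -/
lemma mulVec_norm_le (A : Matrix (Fin d) (Fin d) K) (x : Fin d → K) :
    ‖A.mulVec x‖ ≤ (∑ i, ∑ j, ‖A i j‖) * ‖x‖ := by
  classical
  have hnn : (0:ℝ) ≤ (∑ i, ∑ j, ‖A i j‖) * ‖x‖ := by positivity
  refine pi_norm_le_iff_of_nonneg hnn |>.mpr fun i => ?_
  have h1 : A.mulVec x i = ∑ j, A i j * x j := rfl
  rw [h1]
  calc ‖∑ j, A i j * x j‖ ≤ ∑ j, ‖A i j * x j‖ := norm_sum_le _ _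
    _ ≤ ∑ j, ‖A i j‖ * ‖x‖ := by
        refine Finset.sum_le_sum fun j _ => ?_
        rw [norm_mul]
        exact mul_le_mul_of_nonneg_left (norm_le_pi_norm x j) (norm_nonneg _)
    _ = (∑ j, ‖A i j‖) * ‖x‖ := by rw [Finset.sum_mul]
    _ ≤ (∑ i, ∑ j, ‖A i j‖) * ‖x‖ := by
        refine mul_le_mul_of_nonneg_right ?_ (norm_nonneg _)
        exact Finset.single_le_sum (f := fun i => ∑ j, ‖A i j‖)
          (fun i _ => Finset.sum_nonneg fun j _ => norm_nonneg _) (Finset.mem_univ i)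

end Aux

section OpNorm

variable {d : ℕ} {K : Type*} [RCLike K] {N : (Fin d → K) → ℝ}

lemma opSet_nonempty (hd : 1 ≤ d) (hN : IsNorm N) (A : Matrix (Fin d) (Fin d) K) :
    {r : ℝ | ∃ x : Fin d → K, N x = 1 ∧ r = N (A.mulVec x)}.Nonempty := by
  obtain ⟨x, hx⟩ := hN.exists_unit hd
  exact ⟨N (A.mulVec x), x, hx, rfl⟩

lemma opSet_bddAbove (hd : 1 ≤ d) (hN : IsNorm N) (A : Matrix (Fin d) (Fin d) K) :
    BddAbove {r : ℝ | ∃ x : Fin d → K, N x = 1 ∧ r = N (A.mulVec x)} := by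
  obtain ⟨C, hC0, hC⟩ := hN.exists_upper
  obtain ⟨c, hc0, hc⟩ := hN.exists_lower hd
  refine ⟨C * (∑ i, ∑ j, ‖A i j‖) * c⁻¹, fun r hr => ?_⟩
  obtain ⟨x, hx1, rfl⟩ := hr
  have h1 : N (A.mulVec x) ≤ C * ((∑ i, ∑ j, ‖A i j‖) * ‖x‖) :=
    le_trans (hC _) (mul_le_mul_of_nonneg_left (mulVec_norm_le A x) hC0)
  have h2 : ‖x‖ ≤ c⁻¹ := by
    have := hc x
    rw [hx1] at this
    rw [← one_div]
    rw [le_div_iff₀ hc0]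
    linarith
  have hE : (0:ℝ) ≤ ∑ i, ∑ j, ‖A i j‖ := by positivity
  calc N (A.mulVec x) ≤ C * ((∑ i, ∑ j, ‖A i j‖) * ‖x‖) := h1
    _ ≤ C * ((∑ i, ∑ j, ‖A i j‖) * c⁻¹) := by
        refine mul_le_mul_of_nonneg_left ?_ hC0
        exact mul_le_mul_of_nonneg_left h2 hE
    _ = C * (∑ i, ∑ j, ‖A i j‖) * c⁻¹ := by ring

lemma opNorm_nonneg (hN : IsNorm N) (A : Matrix (Fin d) (Fin d) K) :
    0 ≤ opNorm N A :=
  Real.sSup_nonneg fun r hr => by obtain ⟨x, _, rfl⟩ := hr; exact hN.1 _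

lemma opNorm_unit_le (hd : 1 ≤ d) (hN : IsNorm N) (A : Matrix (Fin d) (Fin d) K)
    {x : Fin d → K} (hx : N x = 1) : N (A.mulVec x) ≤ opNorm N A :=
  le_csSup (opSet_bddAbove hd hN A) ⟨x, hx, rfl⟩

lemma le_opNorm (hd : 1 ≤ d) (hN : IsNorm N) (A : Matrix (Fin d) (Fin d) K) (x : Fin d → K) :
    N (A.mulVec x) ≤ opNorm N A * N x := by
  rcases eq_or_ne x 0 with rfl | hx
  · rw [Matrix.mulVec_zero, hN.zero]
    simp
  · have hp : 0 < N x := hN.pos hx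
    set u : Fin d → K := (((N x)⁻¹ : ℝ) : K) • x with hu
    have hun : N u = 1 := by
      rw [hu, hN.2.2.1, RCLike.norm_ofReal, abs_of_nonneg (inv_nonneg.mpr hp.le),
        inv_mul_cancel₀ hp.ne']
    have h1 : N (A.mulVec u) ≤ opNorm N A := opNorm_unit_le hd hN A hun
    have h2 : A.mulVec u = (((N x)⁻¹ : ℝ) : K) • A.mulVec x := by
      rw [hu, Matrix.mulVec_smul]
    rw [h2, hN.2.2.1, RCLike.norm_ofReal, abs_of_nonneg (inv_nonneg.mpr hp.le)] at h1
    calc N (A.mulVec x) = N x * ((N x)⁻¹ * N (A.mulVec x)) := by field_simp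
      _ ≤ N x * opNorm N A := mul_le_mul_of_nonneg_left h1 hp.le
      _ = opNorm N A * N x := mul_comm _ _

lemma opNorm_le (hd : 1 ≤ d) (hN : IsNorm N) (A : Matrix (Fin d) (Fin d) K) {M : ℝ}
    (hM : 0 ≤ M) (h : ∀ x : Fin d → K, N x = 1 → N (A.mulVec x) ≤ M) : opNorm N A ≤ M :=
  Real.sSup_le (fun r hr => by obtain ⟨x, hx, rfl⟩ := hr; exact h x hx) hM

lemma opNorm_mul_le (hd : 1 ≤ d) (hN : IsNorm N) (A B : Matrix (Fin d) (Fin d) K) :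
    opNorm N (A * B) ≤ opNorm N A * opNorm N B := by
  refine opNorm_le hd hN _ (mul_nonneg (opNorm_nonneg hN A) (opNorm_nonneg hN B)) fun x hx => ?_
  rw [← Matrix.mulVec_mulVec]
  calc N (A.mulVec (B.mulVec x)) ≤ opNorm N A * N (B.mulVec x) := le_opNorm hd hN A _
    _ ≤ opNorm N A * (opNorm N B * N x) :=
        mul_le_mul_of_nonneg_left (le_opNorm hd hN B x) (opNorm_nonneg hN A)
    _ = opNorm N A * opNorm N B := by rw [hx, mul_one]

end OpNorm

section Ratio

variable {d : ℕ} {K : Type*} [RCLike K] {N Nb : (Fin d → K) → ℝ}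

/-- The set of ratios `Nb x / N x` over `x ≠ 0`. -/
lemma ratio_facts (hd : 1 ≤ d) (hN : IsNorm N) (hNb : IsNorm Nb) :
    (0 < sInf {r : ℝ | ∃ x : Fin d → K, x ≠ 0 ∧ r = Nb x / N x}) ∧
    (∀ x : Fin d → K, sInf {r : ℝ | ∃ x : Fin d → K, x ≠ 0 ∧ r = Nb x / N x} * N x ≤ Nb x) ∧
    (∀ x : Fin d → K, Nb x ≤ sSup {r : ℝ | ∃ x : Fin d → K, x ≠ 0 ∧ r = Nb x / N x} * N x) := by
  classical
  set R := {r : ℝ | ∃ x : Fin d → K, x ≠ 0 ∧ r = Nb x / N x} with hR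
  obtain ⟨CN, _, hCN⟩ := hN.exists_upper
  obtain ⟨cN, hcN0, hcN⟩ := hN.exists_lower hd
  obtain ⟨Cb, hCb0, hCb⟩ := hNb.exists_upper
  obtain ⟨cb, hcb0, hcb⟩ := hNb.exists_lower hd
  set CN' := max CN 1 with hCN'
  have hCN'0 : 0 < CN' := lt_of_lt_of_le one_pos (le_max_right _ _)
  have hCN'' : ∀ x, N x ≤ CN' * ‖x‖ := fun x =>
    le_trans (hCN x) (mul_le_mul_of_nonneg_right (le_max_left _ _) (norm_nonneg _))
  have hRne : R.Nonempty := by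
    have : (Pi.single (⟨0, hd⟩ : Fin d) 1 : Fin d → K) ≠ 0 := by
      intro h
      have := congrFun h (⟨0, hd⟩ : Fin d)
      simp [Pi.single_apply] at this
    exact ⟨_, _, this, rfl⟩
  have hlow : ∀ r ∈ R, cb / CN' ≤ r := by
    rintro r ⟨x, hx, rfl⟩
    have hnx : (0:ℝ) < ‖x‖ := norm_pos_iff.mpr hx
    have hNx : 0 < N x := hN.pos hx
    rw [div_le_div_iff₀ hCN'0 hNx]
    calc cb * N x ≤ cb * (CN' * ‖x‖) := mul_le_mul_of_nonneg_left (hCN'' x) hcb0.le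
      _ = (cb * ‖x‖) * CN' := by ring
      _ ≤ Nb x * CN' := mul_le_mul_of_nonneg_right (hcb x) hCN'0.le
  have hhigh : ∀ r ∈ R, r ≤ Cb / cN := by
    rintro r ⟨x, hx, rfl⟩
    have hnx : (0:ℝ) < ‖x‖ := norm_pos_iff.mpr hx
    have hNx : 0 < N x := hN.pos hx
    rw [div_le_div_iff₀ hNx hcN0]
    calc Nb x * cN ≤ (Cb * ‖x‖) * cN := mul_le_mul_of_nonneg_right (hCb x) hcN0.le
      _ = Cb * (cN * ‖x‖) := by ring
      _ ≤ Cb * N x := mul_le_mul_of_nonneg_left (hcN x) hCb0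
  have hbdd : BddAbove R := ⟨Cb / cN, hhigh⟩
  have hbddb : BddBelow R := ⟨cb / CN', hlow⟩
  have h1 : 0 < sInf R := lt_of_lt_of_le (div_pos hcb0 hCN'0) (le_csInf hRne hlow)
  refine ⟨h1, fun x => ?_, fun x => ?_⟩
  · rcases eq_or_ne x 0 with rfl | hx
    · simp [hN.zero, hNb.zero]
    · have hNx : 0 < N x := hN.pos hx
      have : sInf R ≤ Nb x / N x := csInf_le hbddb ⟨x, hx, rfl⟩
      calc sInf R * N x ≤ (Nb x / N x) * N x := mul_le_mul_of_nonneg_right this hNx.le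
        _ = Nb x := by field_simp
  · rcases eq_or_ne x 0 with rfl | hx
    · simp [hN.zero, hNb.zero]
    · have hNx : 0 < N x := hN.pos hx
      have : Nb x / N x ≤ sSup R := le_csSup hbdd ⟨x, hx, rfl⟩
      calc Nb x = (Nb x / N x) * N x := by field_simp
        _ ≤ sSup R * N x := mul_le_mul_of_nonneg_right this hNx.le

end Ratio

section Compactness

variable {d : ℕ} {K : Type*} [RCLike K] {N : (Fin d → K) → ℝ}

/-- compact set of matrices has bounded entry sums. -/
lemma compact_entry_bound {𝒜 : Set (Matrix (Fin d) (Fin d) K)}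
    (h𝒜ne : 𝒜.Nonempty) (h𝒜cp : IsCompact 𝒜) :
    ∃ m : ℝ, ∀ A ∈ 𝒜, (∑ i, ∑ j, ‖A i j‖) ≤ m := by
  classical
  have hcont : Continuous fun A : Matrix (Fin d) (Fin d) K => ∑ i, ∑ j, ‖A i j‖ := by
    refine continuous_finset_sum _ fun i _ => continuous_finset_sum _ fun j _ => ?_
    exact (Continuous.matrix_elem continuous_id i j).norm
  obtain ⟨A₀, _, hmax⟩ := h𝒜cp.exists_isMaxOn h𝒜ne hcont.continuousOn
  exact ⟨_, fun A hA => hmax hA⟩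

/-- opNorm is controlled by entry sums. -/
lemma opNorm_le_entrySum (hd : 1 ≤ d) (hN : IsNorm N) :
    ∃ κ : ℝ, 0 ≤ κ ∧ ∀ A : Matrix (Fin d) (Fin d) K,
      opNorm N A ≤ κ * ∑ i, ∑ j, ‖A i j‖ := by
  obtain ⟨C, hC0, hC⟩ := hN.exists_upper
  obtain ⟨c, hc0, hc⟩ := hN.exists_lower hd
  refine ⟨C * c⁻¹, by positivity, fun A => ?_⟩
  have hE : (0:ℝ) ≤ ∑ i, ∑ j, ‖A i j‖ := by positivity
  refine opNorm_le hd hN A (by positivity) fun x hx => ?_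
  have h2 : ‖x‖ ≤ c⁻¹ := by
    have := hc x
    rw [hx] at this
    rw [← one_div, le_div_iff₀ hc0]
    linarith
  calc N (A.mulVec x) ≤ C * ‖A.mulVec x‖ := hC _
    _ ≤ C * ((∑ i, ∑ j, ‖A i j‖) * ‖x‖) :=
        mul_le_mul_of_nonneg_left (mulVec_norm_le A x) hC0
    _ ≤ C * ((∑ i, ∑ j, ‖A i j‖) * c⁻¹) := by
        refine mul_le_mul_of_nonneg_left (mul_le_mul_of_nonneg_left h2 hE) hC0
    _ = C * c⁻¹ * ∑ i, ∑ j, ‖A i j‖ := by ring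

end Compactness

section HdistProd

variable {d : ℕ} {K : Type*} [RCLike K] {N : (Fin d → K) → ℝ}

lemma hdist_nonneg (hN : IsNorm N) (𝒜 ℬ : Set (Matrix (Fin d) (Fin d) K)) :
    0 ≤ hdist N 𝒜 ℬ := by
  refine le_trans ?_ (le_max_left _ _)
  refine Real.sSup_nonneg fun r hr => ?_
  obtain ⟨A, _, rfl⟩ := hr
  exact Real.sInf_nonneg fun t ht => by obtain ⟨B, _, rfl⟩ := ht; exact opNorm_nonneg hN _

lemma sInf_le_hdist (hd : 1 ≤ d) (hN : IsNorm N)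
    {𝒜 ℬ : Set (Matrix (Fin d) (Fin d) K)}
    (h𝒜ne : 𝒜.Nonempty) (h𝒜cp : IsCompact 𝒜) (hℬne : ℬ.Nonempty)
    {A : Matrix (Fin d) (Fin d) K} (hA : A ∈ 𝒜) :
    sInf ((fun B => opNorm N (A - B)) '' ℬ) ≤ hdist N 𝒜 ℬ := by
  obtain ⟨m, hm⟩ := compact_entry_bound h𝒜ne h𝒜cp
  obtain ⟨κ, hκ0, hκ⟩ := opNorm_le_entrySum hd hN (K := K)
  obtain ⟨B₀, hB₀⟩ := hℬne
  have hbdd : BddAbove ((fun A => sInf ((fun B => opNorm N (A - B)) '' ℬ)) '' 𝒜) := by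
    refine ⟨κ * (m + ∑ i, ∑ j, ‖B₀ i j‖), ?_⟩
    rintro r ⟨A', hA', rfl⟩
    have h1 : sInf ((fun B => opNorm N (A' - B)) '' ℬ) ≤ opNorm N (A' - B₀) :=
      csInf_le ⟨0, fun t ht => by obtain ⟨B, _, rfl⟩ := ht; exact opNorm_nonneg hN _⟩
        ⟨B₀, hB₀, rfl⟩
    refine le_trans h1 (le_trans (hκ _) ?_)
    have h2 : (∑ i, ∑ j, ‖(A' - B₀) i j‖) ≤ m + ∑ i, ∑ j, ‖B₀ i j‖ := by
      have h3 : (∑ i, ∑ j, ‖(A' - B₀) i j‖) ≤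
          (∑ i, ∑ j, ‖A' i j‖) + ∑ i, ∑ j, ‖B₀ i j‖ := by
        rw [← Finset.sum_add_distrib]
        refine Finset.sum_le_sum fun i _ => ?_
        rw [← Finset.sum_add_distrib]
        refine Finset.sum_le_sum fun j _ => ?_
        have : (A' - B₀) i j = A' i j - B₀ i j := rfl
        rw [this]
        exact norm_sub_le _ _
      linarith [hm A' hA']
    exact mul_le_mul_of_nonneg_left h2 hκ0
  refine le_trans (le_csSup hbdd ⟨A, hA, rfl⟩) (le_max_left _ _)

lemma prodSet_nonempty {ℬ : Set (Matrix (Fin d) (Fin d) K)} (hℬne : ℬ.Nonempty) :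
    ∀ n, (prodSet ℬ n).Nonempty
  | 0 => ⟨1, rfl⟩
  | n + 1 => by
    obtain ⟨P, hP⟩ := prodSet_nonempty hℬne n
    obtain ⟨B, hB⟩ := hℬne
    exact ⟨B * P, B, hB, P, hP, rfl⟩

lemma opNorm_one_le (hd : 1 ≤ d) (hN : IsNorm N) :
    opNorm N (1 : Matrix (Fin d) (Fin d) K) ≤ 1 :=
  opNorm_le hd hN _ zero_le_one fun x hx => by rw [Matrix.one_mulVec, hx]

lemma prodSet_opNorm_le (hd : 1 ≤ d) (hN : IsNorm N)
    {ℬ : Set (Matrix (Fin d) (Fin d) K)} {Cb : ℝ} (hCb0 : 0 ≤ Cb)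
    (hCb : ∀ B ∈ ℬ, opNorm N B ≤ Cb) :
    ∀ n, ∀ P ∈ prodSet ℬ n, opNorm N P ≤ Cb ^ n := by
  intro n
  induction n with
  | zero =>
    intro P hP
    have : P = 1 := hP
    rw [this, pow_zero]
    exact opNorm_one_le hd hN
  | succ n ih =>
    rintro P ⟨B, hB, Q, hQ, rfl⟩
    calc opNorm N (B * Q) ≤ opNorm N B * opNorm N Q := opNorm_mul_le hd hN B Q
      _ ≤ Cb * Cb ^ n :=
        mul_le_mul (hCb B hB) (ih Q hQ) (opNorm_nonneg hN Q) hCb0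
      _ = Cb ^ (n + 1) := by ring

end HdistProd

set_option maxHeartbeats 2000000 in
/-- lower estimate `ρ(ℬ) ≥ ρ(𝒜) − C · H(𝒜, ℬ)` with
`C = ecc(‖·‖_𝒜, ‖·‖)`. -/
theorem jsr_lower_ecc {d : ℕ} (hd : 1 ≤ d) {K : Type*} [RCLike K]
    (N : (Fin d → K) → ℝ) (hN : IsNorm N)
    (𝒜 : Set (Matrix (Fin d) (Fin d) K))
    (h𝒜ne : 𝒜.Nonempty) (h𝒜cp : IsCompact 𝒜) (h𝒜ir : IsIrred 𝒜)
    (Nb : (Fin d → K) → ℝ) (hNb : IsBarabanov N Nb 𝒜)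
    (ℬ : Set (Matrix (Fin d) (Fin d) K)) (hℬne : ℬ.Nonempty) (hℬbd : IsBdd N ℬ) :
    jsr N 𝒜 - eccen Nb N * hdist N 𝒜 ℬ ≤ jsr N ℬ := by
  classical
  have hNb' : IsNorm Nb := hNb.1
  -- ratio constants
  set R := {r : ℝ | ∃ x : Fin d → K, x ≠ 0 ∧ r = Nb x / N x} with hRdef
  obtain ⟨hem, hlow, hhigh⟩ := ratio_facts hd hN hNb'
  set em := sInf R with hemdef
  set ep := sSup R with hepdef
  -- a unit vector
  obtain ⟨x₀, hx₀⟩ := hN.exists_unit hd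
  have hx₀ne : x₀ ≠ 0 := fun h => by rw [h, hN.zero] at hx₀; norm_num at hx₀
  have hNbx₀ : 0 < Nb x₀ := hNb'.pos hx₀ne
  have hep : 0 < ep := by
    have h1 := hhigh x₀
    rw [hx₀, mul_one] at h1
    linarith
  have hecc : eccen Nb N = ep / em := rfl
  have hC0 : 0 ≤ eccen Nb N := by rw [hecc]; positivity
  set ρ := jsr N 𝒜 with hρdef
  set h := hdist N 𝒜 ℬ with hhdef
  have hh0 : 0 ≤ h := hdist_nonneg hN 𝒜 ℬ
  -- one step lemma
  have step : ∀ ε : ℝ, 0 < ε → ∀ y : Fin d → K,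
      ∃ B ∈ ℬ, (ρ - eccen Nb N * h - ε * (1 + eccen Nb N)) * Nb y ≤ Nb (B.mulVec y) := by
    intro ε hε y
    rcases eq_or_ne y 0 with rfl | hy
    · obtain ⟨B₀, hB₀⟩ := hℬne
      refine ⟨B₀, hB₀, ?_⟩
      rw [Matrix.mulVec_zero, hNb'.zero, mul_zero]
    · have hNby : 0 < Nb y := hNb'.pos hy
      have hbar := hNb.2 y
      have hSne : {r : ℝ | ∃ A ∈ 𝒜, r = Nb (A.mulVec y)}.Nonempty := by
        obtain ⟨A, hA⟩ := h𝒜ne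
        exact ⟨Nb (A.mulVec y), A, hA, rfl⟩
      have hlt : ρ * Nb y - ε * Nb y < sSup {r : ℝ | ∃ A ∈ 𝒜, r = Nb (A.mulVec y)} := by
        rw [← hbar]; nlinarith
      obtain ⟨r, ⟨A, hA, rfl⟩, hrgt⟩ := exists_lt_of_lt_csSup hSne hlt
      -- find B close to A
      have hIne : ((fun B => opNorm N (A - B)) '' ℬ).Nonempty := hℬne.image _
      have hIlt : sInf ((fun B => opNorm N (A - B)) '' ℬ) < h + ε :=
        lt_of_le_of_lt (sInf_le_hdist hd hN h𝒜ne h𝒜cp hℬne hA) (by linarith)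
      obtain ⟨t, ⟨B, hB, rfl⟩, htlt⟩ := exists_lt_of_csInf_lt hIne hIlt
      refine ⟨B, hB, ?_⟩
      -- triangle inequality
      have htri : Nb (A.mulVec y) ≤ Nb (B.mulVec y) + Nb ((A - B).mulVec y) := by
        have hdecomp : A.mulVec y = B.mulVec y + (A - B).mulVec y := by
          rw [Matrix.sub_mulVec]; ring
        rw [hdecomp]
        exact hNb'.2.2.2 _ _
      have hbound : Nb ((A - B).mulVec y) ≤ ep / em * (h + ε) * Nb y := by
        have h1 : Nb ((A - B).mulVec y) ≤ ep * N ((A - B).mulVec y) := hhigh _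
        have h2 : N ((A - B).mulVec y) ≤ opNorm N (A - B) * N y := le_opNorm hd hN _ _
        have h3 : N y ≤ Nb y / em := by
          have := hlow y
          rw [le_div_iff₀ hem]
          linarith
        have h4 : opNorm N (A - B) * N y ≤ (h + ε) * (Nb y / em) := by
          have hNy0 : 0 ≤ N y := hN.1 y
          have hop0 : 0 ≤ opNorm N (A - B) := opNorm_nonneg hN _
          nlinarith
        calc Nb ((A - B).mulVec y) ≤ ep * N ((A - B).mulVec y) := h1
          _ ≤ ep * (opNorm N (A - B) * N y) := mul_le_mul_of_nonneg_left h2 hep.le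
          _ ≤ ep * ((h + ε) * (Nb y / em)) := mul_le_mul_of_nonneg_left h4 hep.le
          _ = ep / em * (h + ε) * Nb y := by field_simp
      rw [hecc]
      nlinarith
  -- boundedness of the ℬ sequence
  obtain ⟨Cb₀, hCb₀⟩ := hℬbd
  set Cb := max Cb₀ 0 with hCbdef
  have hCb0 : 0 ≤ Cb := le_max_right _ _
  have hCb : ∀ B ∈ ℬ, opNorm N B ≤ Cb := fun B hB =>
    le_trans (hCb₀ B hB) (le_max_left _ _)
  have hPbound := prodSet_opNorm_le hd hN hCb0 hCb
  have hsetnn : ∀ n, 0 ≤ setNorm N (prodSet ℬ n) := fun n =>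
    Real.sSup_nonneg fun r hr => by obtain ⟨P, _, rfl⟩ := hr; exact opNorm_nonneg hN _
  have hsetle : ∀ n, setNorm N (prodSet ℬ n) ≤ Cb ^ n := by
    intro n
    refine Real.sSup_le ?_ (by positivity)
    rintro r ⟨P, hP, rfl⟩
    exact hPbound n P hP
  have hann : ∀ n : ℕ, 0 ≤ setNorm N (prodSet ℬ n) ^ ((n : ℝ)⁻¹) := fun n =>
    Real.rpow_nonneg (hsetnn n) _
  have hbddA : IsBoundedUnder (· ≤ ·) atTop
      (fun n : ℕ => setNorm N (prodSet ℬ n) ^ ((n : ℝ)⁻¹)) := by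
    refine isBoundedUnder_of ⟨max 1 Cb, fun (n : ℕ) => ?_⟩
    rcases Nat.eq_zero_or_pos n with rfl | hn
    · simp only [Nat.cast_zero, inv_zero, Real.rpow_zero]
      exact le_max_left _ _
    · have hn0 : (n : ℝ) ≠ 0 := by exact_mod_cast hn.ne'
      have h1 : setNorm N (prodSet ℬ n) ^ ((n : ℝ)⁻¹) ≤ (Cb ^ n) ^ ((n : ℝ)⁻¹) :=
        Real.rpow_le_rpow (hsetnn n) (hsetle n) (by positivity)
      have h2 : (Cb ^ n) ^ ((n : ℝ)⁻¹) = Cb := by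
        rw [← Real.rpow_natCast Cb n, ← Real.rpow_mul hCb0, mul_inv_cancel₀ hn0,
          Real.rpow_one]
      exact le_trans h1 (by rw [h2]; exact le_max_right 1 Cb)
  have ht0 : 0 ≤ jsr N ℬ :=
    le_limsup_of_frequently_le (Frequently.of_forall fun n => hann n) hbddA
  -- main contradiction argument
  by_contra hcon
  push_neg at hcon
  set t := jsr N ℬ with htdef
  set D := ρ - eccen Nb N * h - t with hDdef
  have hD : 0 < D := by rw [hDdef]; linarith
  set ε := D / (2 * (1 + eccen Nb N)) with hεdef
  have hden : 0 < 2 * (1 + eccen Nb N) := by linarith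
  have hε : 0 < ε := div_pos hD hden
  set s := ρ - eccen Nb N * h - ε * (1 + eccen Nb N) with hsdef
  have hεval : ε * (1 + eccen Nb N) = D / 2 := by
    rw [hεdef]; field_simp
  have hst : t < s := by
    rw [hsdef, hεval]
    rw [hDdef] at hD ⊢
    linarith
  have hs0 : 0 < s := lt_of_le_of_lt ht0 hst
  -- iterate the step lemma
  have hseq : ∀ n : ℕ, ∃ P ∈ prodSet ℬ n, s ^ n * Nb x₀ ≤ Nb (P.mulVec x₀) := by
    intro n
    induction n with
    | zero =>
      refine ⟨1, rfl, ?_⟩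
      rw [pow_zero, one_mul, Matrix.one_mulVec]
    | succ n ih =>
      obtain ⟨P, hP, hPle⟩ := ih
      obtain ⟨B, hB, hBle⟩ := step ε hε (P.mulVec x₀)
      refine ⟨B * P, ⟨B, hB, P, hP, rfl⟩, ?_⟩
      rw [← Matrix.mulVec_mulVec]
      have h1 : s ^ (n + 1) * Nb x₀ = s * (s ^ n * Nb x₀) := by ring
      rw [h1]
      calc s * (s ^ n * Nb x₀) ≤ s * Nb (P.mulVec x₀) :=
            mul_le_mul_of_nonneg_left hPle hs0.le
        _ ≤ Nb (B.mulVec (P.mulVec x₀)) := hBle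
  -- lower bound on setNorm
  set κ := Nb x₀ / ep with hκdef
  have hκ0 : 0 < κ := div_pos hNbx₀ hep
  have hsetge : ∀ n, κ * s ^ n ≤ setNorm N (prodSet ℬ n) := by
    intro n
    obtain ⟨P, hP, hPle⟩ := hseq n
    have h1 : N (P.mulVec x₀) ≤ opNorm N P := opNorm_unit_le hd hN P hx₀
    have h2 : κ * s ^ n ≤ N (P.mulVec x₀) := by
      have h3 : Nb (P.mulVec x₀) ≤ ep * N (P.mulVec x₀) := hhigh _
      rw [hκdef, div_mul_eq_mul_div, div_le_iff₀ hep]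
      nlinarith
    have h4 : opNorm N P ≤ setNorm N (prodSet ℬ n) := by
      refine le_csSup ⟨Cb ^ n, ?_⟩ (mem_image_of_mem _ hP)
      rintro r ⟨Q, hQ, rfl⟩
      exact hPbound n Q hQ
    linarith
  -- conclude via limsup
  have hg : Tendsto (fun n : ℕ => κ ^ ((n : ℝ)⁻¹) * s) atTop (nhds s) := by
    have h1 : Tendsto (fun n : ℕ => κ ^ ((n : ℝ)⁻¹)) atTop (nhds 1) := by
      have heq : ∀ n : ℕ, κ ^ ((n : ℝ)⁻¹) = Real.exp (Real.log κ * (n : ℝ)⁻¹) :=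
        fun n => Real.rpow_def_of_pos hκ0 _
      simp only [heq]
      have h2 : Tendsto (fun n : ℕ => Real.log κ * (n : ℝ)⁻¹) atTop (nhds 0) := by
        simpa using
          (tendsto_inv_atTop_zero.comp tendsto_natCast_atTop_atTop).const_mul (Real.log κ)
      have h3 := (Real.continuous_exp.tendsto 0).comp h2
      rw [Real.exp_zero] at h3
      exact h3
    simpa using h1.mul_const s
  have hle : ∀ᶠ n : ℕ in atTop,
      κ ^ ((n : ℝ)⁻¹) * s ≤ setNorm N (prodSet ℬ n) ^ ((n : ℝ)⁻¹) := by
    filter_upwards [eventually_ge_atTop 1] with n hn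
    have hn0 : (n : ℝ) ≠ 0 := by
      have : 0 < n := hn
      exact_mod_cast this.ne'
    have h1 : (κ * s ^ n) ^ ((n : ℝ)⁻¹) ≤ setNorm N (prodSet ℬ n) ^ ((n : ℝ)⁻¹) :=
      Real.rpow_le_rpow (by positivity) (hsetge n) (by positivity)
    have h2 : (κ * s ^ n) ^ ((n : ℝ)⁻¹) = κ ^ ((n : ℝ)⁻¹) * s := by
      rw [Real.mul_rpow hκ0.le (by positivity), ← Real.rpow_natCast s n,
        ← Real.rpow_mul hs0.le, mul_inv_cancel₀ hn0, Real.rpow_one]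
    rw [← h2]
    exact h1
  have hfinal : s ≤ t := by
    have h1 : limsup (fun n : ℕ => κ ^ ((n : ℝ)⁻¹) * s) atTop = s := hg.limsup_eq
    have h2 : limsup (fun n : ℕ => κ ^ ((n : ℝ)⁻¹) * s) atTop ≤
        limsup (fun n : ℕ => setNorm N (prodSet ℬ n) ^ ((n : ℝ)⁻¹)) atTop :=
      limsup_le_limsup hle hg.isBoundedUnder_ge.isCoboundedUnder_le hbddA
    rw [h1] at h2
    exact h2
  linarith

end JSRPaper
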